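/- Let f₁, f₂ : ℝⁿ → ℝ ∪ {+∞} be lower semicontinuous functions and u ∈ 𝕊, and assume the qualification condition ∂^∞f₁(∞;u) ∩ (−∂^∞f₂(∞;u)) = {0}. Then the pointwise maximum satisfies: ∂(max{f₁,f₂})(∞;u) ⊆ ⋃_{λ₁,λ₂ ∈ [0,1], λ₁+λ₂=1} (λ₁∘∂f₁(∞;u) + λ₂∘∂f₂(∞;u)), where λ∘∂f(∞;u) means λ·∂f(∞;u) if λ > 0 and ∂^∞f(∞;u) if λ = 0; moreover ∂^∞(max{f₁,f₂})(∞;u) ⊆ ∂^∞f₁(∞;u) + ∂^∞f₂(∞;u). -/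

import Mathlib

open Filter Topology Set
open scoped RealInnerProductSpace Pointwise

noncomputable section

/-- `ℝⁿ` with the Euclidean structure. -/
abbrev Eu (n : ℕ) := EuclideanSpace ℝ (Fin n)

/-- `x_k →ᵘ ∞` : `‖x_k‖ → ∞` and `x_k / ‖x_k‖ → u`. -/
def TendstoDirInfty {n : ℕ} (x : ℕ → Eu n) (u : Eu n) : Prop :=
  Tendsto (fun k => ‖x k‖) atTop atTop ∧
  Tendsto (fun k => ‖x k‖⁻¹ • x k) atTop (𝓝 u)

/-- The Euclidean norm of `p ∈ ℝⁿ × ℝ`. -/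
def pnorm {n : ℕ} (p : Eu n × ℝ) : ℝ := Real.sqrt (‖p.1‖ ^ 2 + p.2 ^ 2)

/-- The Euclidean inner product on `ℝⁿ × ℝ`. -/
def pinner {n : ℕ} (v p : Eu n × ℝ) : ℝ := ⟪v.1, p.1⟫ + v.2 * p.2

/-- The Fréchet (regular) normal cone to `S ⊆ ℝⁿ × ℝ` at `q` (empty when `q ∉ S`). -/
def frechetNCP {n : ℕ} (S : Set (Eu n × ℝ)) (q : Eu n × ℝ) : Set (Eu n × ℝ) :=
  {w | q ∈ S ∧ ∀ ε > 0, ∃ δ > 0, ∀ p ∈ S, pnorm (p - q) < δ →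
        pinner w (p - q) ≤ ε * pnorm (p - q)}

/-- Epigraph of `f : ℝⁿ → ℝ ∪ {+∞}`. -/
def epigraph {n : ℕ} (f : Eu n → EReal) : Set (Eu n × ℝ) := {p | f p.1 ≤ (p.2 : EReal)}

/-- The limiting subdifferential of `f` in direction `u` at infinity:
`ξ` with `(ξ_k, -s_k) ∈ N̂((x_k, r_k); epi f)`, `r_k ≥ f(x_k)`, `x_k →ᵘ ∞`,
`(ξ_k, -s_k) → (ξ, -1)`. -/
def dirSubdiffInfty {n : ℕ} (f : Eu n → EReal) (u : Eu n) : Set (Eu n) :=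
  {ξ | ∃ (x : ℕ → Eu n) (r : ℕ → ℝ) (w : ℕ → Eu n × ℝ),
      TendstoDirInfty x u ∧ (∀ k, f (x k) ≤ ((r k : ℝ) : EReal)) ∧
      (∀ k, w k ∈ frechetNCP (epigraph f) (x k, r k)) ∧
      Tendsto w atTop (𝓝 (ξ, (-1 : ℝ)))}

/-- The singular subdifferential of `f` in direction `u` at infinity. -/
def dirSingSubdiffInfty {n : ℕ} (f : Eu n → EReal) (u : Eu n) : Set (Eu n) :=
  {ξ | ∃ (x : ℕ → Eu n) (r : ℕ → ℝ) (w : ℕ → Eu n × ℝ),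
      TendstoDirInfty x u ∧ (∀ k, f (x k) ≤ ((r k : ℝ) : EReal)) ∧
      (∀ k, w k ∈ frechetNCP (epigraph f) (x k, r k)) ∧
      Tendsto w atTop (𝓝 (ξ, (0 : ℝ)))}

/-- `λ ∘ ∂f(∞; u)`: equals `λ • ∂f(∞; u)` for `λ ≠ 0` and `∂^∞f(∞; u)` for `λ = 0`. -/
def lamComp {n : ℕ} (l : ℝ) (f : Eu n → EReal) (u : Eu n) : Set (Eu n) :=
  if l = 0 then dirSingSubdiffInfty f u else l • dirSubdiffInfty f u

variable {n : ℕ}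

def toL2 {n : ℕ} : (Eu n × ℝ) ≃L[ℝ] WithLp 2 ((Eu n) × ℝ) :=
  (WithLp.prodContinuousLinearEquiv 2 ℝ (Eu n) ℝ).symm

lemma pnorm_eq (p : Eu n × ℝ) : pnorm p = ‖toL2 p‖ := by
  have h := WithLp.prod_norm_sq_eq_of_L2 (toL2 p)
  have hn : (0:ℝ) ≤ ‖toL2 p‖ := norm_nonneg _
  have : ‖(toL2 p).fst‖ = ‖p.1‖ := rfl
  have h2 : ‖(toL2 p).snd‖ = |p.2| := rfl
  rw [pnorm]
  rw [show ‖p.1‖^2 + p.2^2 = ‖toL2 p‖^2 by rw [h, this, h2, sq_abs]]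
  exact Real.sqrt_sq hn

lemma pinner_eq (v p : Eu n × ℝ) : pinner v p = ⟪toL2 v, toL2 p⟫ := by
  rw [WithLp.prod_inner_apply]
  rw [pinner]; congr 1; exact mul_comm _ _

lemma toL2_add (x y : Eu n × ℝ) : toL2 (x + y) = toL2 x + toL2 y := map_add _ _ _
lemma toL2_smul (c : ℝ) (x : Eu n × ℝ) : toL2 (c • x) = c • toL2 x := map_smul _ _ _
lemma toL2_sub (x y : Eu n × ℝ) : toL2 (x - y) = toL2 x - toL2 y := map_sub _ _ _
lemma toL2_neg (x : Eu n × ℝ) : toL2 (-x) = -toL2 x := map_neg _ _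
lemma toL2_zero : toL2 (0 : Eu n × ℝ) = 0 := map_zero _

lemma pnorm_nonneg (p : Eu n × ℝ) : 0 ≤ pnorm p := by rw [pnorm_eq]; exact norm_nonneg _
lemma pnorm_zero : pnorm (0 : Eu n × ℝ) = 0 := by rw [pnorm_eq, toL2_zero, norm_zero]
lemma pnorm_eq_zero {p : Eu n × ℝ} : pnorm p = 0 ↔ p = 0 := by
  rw [pnorm_eq, norm_eq_zero]
  constructor
  · intro h; have := congrArg toL2.symm h; simpa using this
  · rintro rfl; exact toL2_zero
lemma pnorm_neg (p : Eu n × ℝ) : pnorm (-p) = pnorm p := by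
  rw [pnorm_eq, pnorm_eq, toL2_neg, norm_neg]
lemma pnorm_add_le (x y : Eu n × ℝ) : pnorm (x + y) ≤ pnorm x + pnorm y := by
  rw [pnorm_eq, pnorm_eq, pnorm_eq, toL2_add]; exact norm_add_le _ _
lemma pnorm_sub_le (x y : Eu n × ℝ) : pnorm (x - y) ≤ pnorm x + pnorm y := by
  rw [sub_eq_add_neg, ← pnorm_neg y]; exact pnorm_add_le _ _
lemma pnorm_smul (c : ℝ) (x : Eu n × ℝ) : pnorm (c • x) = |c| * pnorm x := by
  rw [pnorm_eq, pnorm_eq, toL2_smul, norm_smul, Real.norm_eq_abs]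
lemma pinner_comm (x y : Eu n × ℝ) : pinner x y = pinner y x := by
  rw [pinner_eq, pinner_eq, real_inner_comm]
lemma pinner_add_right (w x y : Eu n × ℝ) : pinner w (x + y) = pinner w x + pinner w y := by
  simp [pinner_eq, toL2_add, inner_add_right]
lemma pinner_add_left (v w x : Eu n × ℝ) : pinner (v + w) x = pinner v x + pinner w x := by
  simp [pinner_eq, toL2_add, inner_add_left]
lemma pinner_smul_left (c : ℝ) (w x : Eu n × ℝ) : pinner (c • w) x = c * pinner w x := by
  rw [pinner_eq, pinner_eq, toL2_smul, real_inner_smul_left]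
lemma pinner_smul_right (c : ℝ) (w x : Eu n × ℝ) : pinner w (c • x) = c * pinner w x := by
  rw [pinner_eq, pinner_eq, toL2_smul, real_inner_smul_right]
lemma pinner_neg_left (w x : Eu n × ℝ) : pinner (-w) x = -pinner w x := by
  simp [pinner_eq, toL2_neg, inner_neg_left]
lemma pinner_neg_right (w x : Eu n × ℝ) : pinner w (-x) = -pinner w x := by
  simp [pinner_eq, toL2_neg, inner_neg_right]
lemma pinner_sub_right (w x y : Eu n × ℝ) : pinner w (x - y) = pinner w x - pinner w y := by
  simp [pinner_eq, toL2_sub, inner_sub_right]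
lemma pinner_sub_left (v w x : Eu n × ℝ) : pinner (v - w) x = pinner v x - pinner w x := by
  simp [pinner_eq, toL2_sub, inner_sub_left]
lemma pinner_zero_right (w : Eu n × ℝ) : pinner w 0 = 0 := by
  simp [pinner_eq, toL2_zero]
lemma pinner_self (x : Eu n × ℝ) : pinner x x = pnorm x ^ 2 := by
  rw [pinner_eq, pnorm_eq, real_inner_self_eq_norm_sq]
lemma pinner_le (x y : Eu n × ℝ) : pinner x y ≤ pnorm x * pnorm y := by
  rw [pinner_eq, pnorm_eq, pnorm_eq]; exact real_inner_le_norm _ _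
lemma abs_pinner_le (x y : Eu n × ℝ) : |pinner x y| ≤ pnorm x * pnorm y := by
  rw [pinner_eq, pnorm_eq, pnorm_eq]; exact abs_real_inner_le_norm _ _
lemma pnorm_add_sq (x y : Eu n × ℝ) :
    pnorm (x + y) ^ 2 = pnorm x ^ 2 + 2 * pinner x y + pnorm y ^ 2 := by
  rw [pnorm_eq, pnorm_eq, pnorm_eq, pinner_eq, toL2_add]
  rw [← real_inner_self_eq_norm_sq, ← real_inner_self_eq_norm_sq, ← real_inner_self_eq_norm_sq]
  rw [inner_add_add_self]
  have : ⟪toL2 x, toL2 y⟫ = ⟪toL2 y, toL2 x⟫ := real_inner_comm _ _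
  rw [this]; ring
lemma fst_norm_le_pnorm (p : Eu n × ℝ) : ‖p.1‖ ≤ pnorm p := by
  rw [pnorm]
  rw [show ‖p.1‖ = Real.sqrt (‖p.1‖^2) from (Real.sqrt_sq (norm_nonneg _)).symm]
  exact Real.sqrt_le_sqrt (by nlinarith [sq_nonneg p.2, Real.sq_sqrt (sq_nonneg ‖p.1‖), Real.sqrt_sq (norm_nonneg p.1)])
lemma snd_abs_le_pnorm (p : Eu n × ℝ) : |p.2| ≤ pnorm p := by
  rw [pnorm]
  have : |p.2| = Real.sqrt (p.2^2) := (Real.sqrt_sq_eq_abs _).symm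
  rw [this]
  exact Real.sqrt_le_sqrt (by nlinarith [sq_nonneg ‖p.1‖])
lemma prod_norm_le_pnorm (p : Eu n × ℝ) : ‖p‖ ≤ pnorm p := by
  rw [Prod.norm_def]
  exact max_le (fst_norm_le_pnorm p) (by simpa [Real.norm_eq_abs] using snd_abs_le_pnorm p)
lemma pnorm_le_prod (p : Eu n × ℝ) : pnorm p ≤ 2 * ‖p‖ := by
  rw [pnorm, Prod.norm_def]
  have h1 : ‖p.1‖ ≤ max ‖p.1‖ ‖p.2‖ := le_max_left _ _
  have h2 : ‖p.2‖ ≤ max ‖p.1‖ ‖p.2‖ := le_max_right _ _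
  have hm : 0 ≤ max ‖p.1‖ ‖p.2‖ := le_trans (norm_nonneg _) h1
  have : ‖p.1‖^2 + p.2^2 ≤ (2 * max ‖p.1‖ ‖p.2‖)^2 := by
    have : |p.2| = ‖p.2‖ := rfl
    have hb : ‖p.2‖ = |p.2| := rfl
    nlinarith [norm_nonneg p.1, abs_nonneg p.2, sq_abs p.2, h1, h2, hb]
  calc Real.sqrt (‖p.1‖^2 + p.2^2) ≤ Real.sqrt ((2*max ‖p.1‖ ‖p.2‖)^2) := Real.sqrt_le_sqrt this
    _ = 2 * max ‖p.1‖ ‖p.2‖ := Real.sqrt_sq (by linarith)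
lemma continuous_pnorm : Continuous (fun p : Eu n × ℝ => pnorm p) := by
  simp only [pnorm_eq]
  exact (toL2.continuous).norm



lemma frechetNCP_mem_set {S : Set (Eu n × ℝ)} {q w : Eu n × ℝ}
    (h : w ∈ frechetNCP S q) : q ∈ S := h.1

/-- positive scaling stays in the Fréchet normal cone -/
lemma frechetNCP_smul {S : Set (Eu n × ℝ)} {q w : Eu n × ℝ} {c : ℝ} (hc : 0 < c)
    (h : w ∈ frechetNCP S q) : c • w ∈ frechetNCP S q := by
  refine ⟨h.1, fun ε hε => ?_⟩
  obtain ⟨δ, hδ, hd⟩ := h.2 (ε / c) (div_pos hε hc)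
  refine ⟨δ, hδ, fun p hp hlt => ?_⟩
  rw [pinner_smul_left]
  have := hd p hp hlt
  calc c * pinner w (p - q) ≤ c * (ε / c * pnorm (p - q)) := by
        exact mul_le_mul_of_nonneg_left this hc.le
    _ = ε * pnorm (p - q) := by field_simp
/-- normals to an epigraph point downward in the last coordinate -/
lemma frechetNCP_epigraph_snd {f : Eu n → EReal} {q w : Eu n × ℝ}
    (h : w ∈ frechetNCP (epigraph f) q) : w.2 ≤ 0 := by
  by_contra hw
  push_neg at hw
  obtain ⟨δ, hδ, hd⟩ := h.2 (w.2 / 2) (by linarith)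
  set t : ℝ := δ / 2 with ht
  have htpos : 0 < t := by positivity
  have hq := h.1
  have hmem : (q.1, q.2 + t) ∈ epigraph f := by
    have h2 : ((q.2 : ℝ) : EReal) ≤ ((q.2 + t : ℝ) : EReal) :=
      EReal.coe_le_coe_iff.mpr (by linarith)
    exact le_trans hq h2
  have hsub : ((q.1, q.2 + t) : Eu n × ℝ) - q = (0, t) := by
    ext <;> simp
  have hpn : pnorm ((0 : Eu n), t) = t := by
    simp [pnorm, htpos.le, Real.sqrt_sq htpos.le]
  have hlt : pnorm (((q.1, q.2 + t) : Eu n × ℝ) - q) < δ := by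
    rw [hsub, hpn]; linarith
  have := hd _ hmem hlt
  rw [hsub, hpn] at this
  have hpi : pinner w ((0 : Eu n), t) = w.2 * t := by
    simp [pinner]
  rw [hpi] at this
  nlinarith
/-- minimization of a function with a quadratic upper model gives a Fréchet normal -/
lemma frechetNCP_of_min {S : Set (Eu n × ℝ)} {q₀ g : Eu n × ℝ} {ψ : Eu n × ℝ → ℝ} {ρ C : ℝ}
    (hq : q₀ ∈ S) (hρ : 0 < ρ)
    (hmin : ∀ p ∈ S, pnorm (p - q₀) < ρ → ψ q₀ ≤ ψ p)
    (hexp : ∀ p, ψ p - ψ q₀ ≤ pinner g (p - q₀) + C * pnorm (p - q₀) ^ 2) :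
    -g ∈ frechetNCP S q₀ := by
  refine ⟨hq, fun ε hε => ?_⟩
  set C' : ℝ := max C 1 with hC'
  have hC'pos : 0 < C' := lt_of_lt_of_le one_pos (le_max_right _ _)
  refine ⟨min ρ (ε / C'), lt_min hρ (by positivity), fun p hp hlt => ?_⟩
  have h1 : pnorm (p - q₀) < ρ := lt_of_lt_of_le hlt (min_le_left _ _)
  have h2 : pnorm (p - q₀) < ε / C' := lt_of_lt_of_le hlt (min_le_right _ _)
  have h0 : 0 ≤ ψ p - ψ q₀ := sub_nonneg.mpr (hmin p hp h1)
  have hx := hexp p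
  have hCC : C * pnorm (p - q₀) ^ 2 ≤ C' * pnorm (p - q₀) ^ 2 :=
    mul_le_mul_of_nonneg_right (le_max_left _ _) (sq_nonneg _)
  rw [pinner_neg_left]
  have hpn : 0 ≤ pnorm (p - q₀) := pnorm_nonneg _
  have key : C' * pnorm (p - q₀) ^ 2 ≤ ε * pnorm (p - q₀) := by
    have h3 : pnorm (p - q₀) * pnorm (p - q₀) ≤ (ε / C') * pnorm (p - q₀) :=
      mul_le_mul_of_nonneg_right h2.le hpn
    calc C' * pnorm (p - q₀) ^ 2 = C' * (pnorm (p - q₀) * pnorm (p - q₀)) := by ring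
      _ ≤ C' * ((ε / C') * pnorm (p - q₀)) := mul_le_mul_of_nonneg_left h3 hC'pos.le
      _ = ε * pnorm (p - q₀) := by field_simp
  linarith

lemma epigraph_closed {f : Eu n → EReal} (hf : LowerSemicontinuous f) :
    IsClosed (epigraph f) := by
  rw [← isOpen_compl_iff]
  rw [isOpen_iff_mem_nhds]
  intro p hp
  have hp' : (p.2 : EReal) < f p.1 := not_le.mp hp
  obtain ⟨c, hc1, hc2⟩ := EReal.exists_between_coe_real hp'
  have ev1 : ∀ᶠ p' : Eu n × ℝ in 𝓝 p, (c : EReal) < f p'.1 :=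
    (continuous_fst.tendsto p).eventually (hf p.1 c hc2)
  have ev2 : ∀ᶠ p' : Eu n × ℝ in 𝓝 p, p'.2 < c := by
    have hopen : IsOpen {p' : Eu n × ℝ | p'.2 < c} := isOpen_lt continuous_snd continuous_const
    exact hopen.mem_nhds (by exact_mod_cast EReal.coe_lt_coe_iff.mp hc1)
  filter_upwards [ev1, ev2] with p' h1 h2
  intro hmem
  have : (p'.2 : EReal) < f p'.1 := lt_trans (EReal.coe_lt_coe_iff.mpr h2) h1
  exact absurd hmem (not_le.mpr this)

lemma epigraph_max (f₁ f₂ : Eu n → EReal) :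
    epigraph (fun x => max (f₁ x) (f₂ x)) = epigraph f₁ ∩ epigraph f₂ := by
  ext p
  simp [epigraph, max_le_iff, Set.mem_inter_iff]

/-- closed `pnorm`-balls intersected with closed sets are compact -/
lemma isCompact_inter_ball {S : Set (Eu n × ℝ)} (hS : IsClosed S) (q : Eu n × ℝ) (δ : ℝ) :
    IsCompact (S ∩ {p | pnorm (p - q) ≤ δ}) := by
  have hcb : IsClosed {p : Eu n × ℝ | pnorm (p - q) ≤ δ} := by
    have : Continuous fun p : Eu n × ℝ => pnorm (p - q) :=
      continuous_pnorm.comp (continuous_id.sub continuous_const)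
    exact isClosed_le this continuous_const
  have hsub : S ∩ {p | pnorm (p - q) ≤ δ} ⊆ Metric.closedBall q δ := by
    intro p hp
    rw [Metric.mem_closedBall, dist_eq_norm]
    exact le_trans (prod_norm_le_pnorm _) hp.2
  exact (isCompact_closedBall q δ).of_isClosed_subset (hS.inter hcb) hsub

lemma pnorm_sub_sq (x y : Eu n × ℝ) :
    pnorm (x - y) ^ 2 = pnorm x ^ 2 - 2 * pinner x y + pnorm y ^ 2 := by
  rw [sub_eq_add_neg, pnorm_add_sq, pinner_neg_right, pnorm_neg]; ring

lemma abs_pnorm_sub_pnorm_le (x y : Eu n × ℝ) : |pnorm x - pnorm y| ≤ pnorm (x - y) := by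
  rw [pnorm_eq, pnorm_eq, pnorm_eq, toL2_sub]
  exact abs_norm_sub_norm_le _ _

lemma continuous_pinner_right (w : Eu n × ℝ) : Continuous (fun x : Eu n × ℝ => pinner w x) := by
  simp only [pinner_eq]
  exact Continuous.inner continuous_const toL2.continuous

set_option maxHeartbeats 1000000 in
lemma sqfun_upper {q a p : Eu n × ℝ} {t : ℝ} (ht : 0 < t) :
    Real.sqrt (pnorm (p - q) ^ 2 + t ^ 2) - Real.sqrt (pnorm (a - q) ^ 2 + t ^ 2)
      ≤ pinner ((Real.sqrt (pnorm (a - q) ^ 2 + t ^ 2))⁻¹ • (a - q)) (p - a)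
        + (1 / t) * pnorm (p - a) ^ 2 := by
  set a' : Eu n × ℝ := a - q with ha'
  set h : Eu n × ℝ := p - a with hh
  have hph : a' + h = p - q := by rw [ha', hh]; abel
  set α := pnorm a' with hα
  set β := pnorm (p - q) with hβ
  set γ := pnorm h with hγ
  set I := pinner a' h with hI
  set A := Real.sqrt (α ^ 2 + t ^ 2) with hA
  set B := Real.sqrt (β ^ 2 + t ^ 2) with hB
  have hα0 : 0 ≤ α := pnorm_nonneg _
  have hβ0 : 0 ≤ β := pnorm_nonneg _
  have hγ0 : 0 ≤ γ := pnorm_nonneg _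
  have hA2 : A ^ 2 = α ^ 2 + t ^ 2 := Real.sq_sqrt (by positivity)
  have hB2 : B ^ 2 = β ^ 2 + t ^ 2 := Real.sq_sqrt (by positivity)
  have htA : t ≤ A := (Real.le_sqrt ht.le (by positivity)).mpr (by nlinarith)
  have htB : t ≤ B := (Real.le_sqrt ht.le (by positivity)).mpr (by nlinarith)
  have hA0 : 0 < A := lt_of_lt_of_le ht htA
  have hB0 : 0 < B := lt_of_lt_of_le ht htB
  have hαA : α ≤ A := (Real.le_sqrt hα0 (by positivity)).mpr (by nlinarith)
  have hβB : β ≤ B := (Real.le_sqrt hβ0 (by positivity)).mpr (by nlinarith)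
  have hβsq : β ^ 2 = α ^ 2 + 2 * I + γ ^ 2 := by
    rw [hβ, ← hph, pnorm_add_sq, hα, hI, hγ]
  have hCS : |I| ≤ α * γ := by rw [hI, hα, hγ]; exact abs_pinner_le _ _
  have hrev : |α - β| ≤ γ := by
    rw [hα, hβ, hγ]
    have heq : a' - (p - q) = -h := by rw [ha', hh]; abel
    calc |pnorm a' - pnorm (p - q)| ≤ pnorm (a' - (p - q)) := abs_pnorm_sub_pnorm_le _ _
      _ = pnorm h := by rw [heq, pnorm_neg]
  have hsum : 0 < A + B := by linarith
  have hABγ : |A - B| ≤ γ := by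
    have h1 : |A - B| * (A + B) = |α - β| * (α + β) := by
      rw [← abs_of_pos hsum, ← abs_mul]
      rw [show (A - B) * (A + B) = A^2 - B^2 by ring, hA2, hB2]
      rw [show α^2 + t^2 - (β^2 + t^2) = (α - β) * (α + β) by ring, abs_mul]
      rw [abs_of_nonneg (by linarith : (0:ℝ) ≤ α + β)]
    have h2 : |α - β| * (α + β) ≤ γ * (A + B) := by
      have := mul_le_mul hrev (by linarith : α + β ≤ A + B) (by linarith) hγ0
      linarith
    have h3 : |A - B| * (A + B) ≤ γ * (A + B) := by rw [h1]; exact h2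
    exact le_of_mul_le_mul_right h3 hsum
  have hBA : (B - A) * (A + B) = 2 * I + γ ^ 2 := by
    rw [show (B - A) * (A + B) = B^2 - A^2 by ring, hA2, hB2, hβsq]; ring
  have hkey : I * (A - B) ≤ A * γ ^ 2 := by
    calc I * (A - B) ≤ |I * (A - B)| := le_abs_self _
      _ = |I| * |A - B| := abs_mul _ _
      _ ≤ (α * γ) * γ := mul_le_mul hCS hABγ (abs_nonneg _) (by positivity)
      _ ≤ A * γ ^ 2 := by nlinarith
  have hgrad : pinner (A⁻¹ • a') h = I / A := by
    rw [pinner_smul_left, hI]; field_simp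
  rw [hgrad]
  have hr : 2 * γ^2 * A ≤ (1/t) * γ^2 * (A * (A + B)) := by
    have hid : (1/t) * γ^2 * (A * (A + B)) - 2 * γ^2 * A = (γ^2 * A / t) * ((A + B) - 2*t) := by
      field_simp
    nlinarith [mul_nonneg (mul_nonneg (sq_nonneg γ) hA0.le) (by positivity : (0:ℝ) ≤ 1/t),
      mul_nonneg (div_nonneg (mul_nonneg (sq_nonneg γ) hA0.le) ht.le)
        (by linarith : (0:ℝ) ≤ (A + B) - 2*t)]
  have hmain : (2 * I + γ^2) * A ≤ I * (A + B) + (1/t) * γ^2 * (A * (A + B)) := by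
    have hid : (2*I + γ^2) * A - I * (A + B) = I * (A - B) + γ^2 * A := by ring
    linarith [hkey]
  have hBA' : B - A = (2 * I + γ^2) / (A + B) := by
    rw [← hBA]; field_simp
  rw [hBA']
  rw [div_le_iff₀ hsum]
  have hrhs : (I / A + 1/t * γ^2) * (A + B)
      = (I * (A + B) + (1/t) * γ^2 * (A * (A + B))) / A := by
    field_simp
  rw [hrhs, le_div_iff₀ hA0]
  linarith [hmain]

set_option maxHeartbeats 2000000 in
/-- Fuzzy intersection rule for Fréchet normals of two closed sets. -/
lemma fuzzy {S₁ S₂ : Set (Eu n × ℝ)} (h₁ : IsClosed S₁) (h₂ : IsClosed S₂)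
    {q w : Eu n × ℝ} (hw : w ∈ frechetNCP (S₁ ∩ S₂) q) {ε : ℝ} (hε : 0 < ε) :
    ∃ p₁ p₂ u₁ u₂, u₁ ∈ frechetNCP S₁ p₁ ∧ u₂ ∈ frechetNCP S₂ p₂ ∧
      pnorm (p₁ - q) ≤ ε ∧ pnorm (p₂ - q) ≤ ε ∧ pnorm (w - u₁ - u₂) ≤ ε := by
  obtain ⟨hqS, hcond⟩ := hw
  set ε₀ : ℝ := ε / 4 with hε₀
  have hε₀pos : 0 < ε₀ := by positivity
  obtain ⟨δ', hδ'pos, hineq⟩ := hcond ε₀ hε₀pos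
  set δ : ℝ := min (δ' / 2) (ε / 4) with hδdef
  have hδpos : 0 < δ := lt_min (by positivity) (by positivity)
  have hδδ' : δ < δ' := lt_of_le_of_lt (min_le_left _ _) (by linarith)
  have hδε : δ ≤ ε / 4 := min_le_right _ _
  set t : ℝ := δ ^ 2 / (2 * ε₀) with htdef
  have htpos : 0 < t := by positivity
  have het : ε₀ * t = δ ^ 2 / 2 := by rw [htdef]; field_simp
  set sfun : (Eu n × ℝ) → ℝ := fun p => Real.sqrt (pnorm (p - q) ^ 2 + t ^ 2) with hsfun
  have hs_ge : ∀ p, pnorm (p - q) ≤ sfun p := fun p =>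
    (Real.le_sqrt (pnorm_nonneg _) (by positivity)).mpr (by nlinarith [sq_nonneg t])
  have hs_ge_t : ∀ p, t ≤ sfun p := fun p =>
    (Real.le_sqrt htpos.le (by positivity)).mpr (by nlinarith [sq_nonneg (pnorm (p - q))])
  have hs_q : sfun q = t := by
    simp only [hsfun, sub_self, pnorm_zero]
    rw [show (0:ℝ)^2 + t^2 = t^2 by ring]
    exact Real.sqrt_sq htpos.le
  set Bs : Set (Eu n × ℝ) := {p | pnorm (p - q) ≤ δ} with hBs
  set D : Set ((Eu n × ℝ) × (Eu n × ℝ)) := (S₁ ∩ Bs) ×ˢ (S₂ ∩ Bs) with hDdef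
  have hDc : IsCompact D := (isCompact_inter_ball h₁ q δ).prod (isCompact_inter_ball h₂ q δ)
  have hqBs : q ∈ Bs := by simp only [hBs, Set.mem_setOf_eq, sub_self, pnorm_zero]; exact hδpos.le
  have hqD : ((q, q) : (Eu n × ℝ) × (Eu n × ℝ)) ∈ D := ⟨⟨hqS.1, hqBs⟩, ⟨hqS.2, hqBs⟩⟩
  set φ : ℕ → ((Eu n × ℝ) × (Eu n × ℝ)) → ℝ := fun k pp =>
    -pinner w (pp.1 - q) + ε₀ * (sfun pp.1 - t) + ((k : ℝ) + 1) * pnorm (pp.1 - pp.2) ^ 2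
      + pnorm (pp.1 - q) ^ 2 with hφdef
  have cpnq : Continuous fun p : Eu n × ℝ => pnorm (p - q) :=
    continuous_pnorm.comp (continuous_id.sub continuous_const)
  have csfun : Continuous sfun :=
    Real.continuous_sqrt.comp (((cpnq.pow 2).add continuous_const))
  have hφcont : ∀ k, Continuous (φ k) := by
    intro k
    apply Continuous.add
    apply Continuous.add
    apply Continuous.add
    · exact ((continuous_pinner_right w).comp (continuous_fst.sub continuous_const)).neg
    · exact (continuous_const.mul ((csfun.comp continuous_fst).sub continuous_const))
    · exact continuous_const.mul
        ((continuous_pnorm.comp (continuous_fst.sub continuous_snd)).pow 2)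
    · exact (cpnq.comp continuous_fst).pow 2
  have hmins : ∀ k : ℕ, ∃ mm ∈ D, ∀ p ∈ D, φ k mm ≤ φ k p := by
    intro k
    obtain ⟨mm, hmm, hmin⟩ := hDc.exists_isMinOn ⟨(q, q), hqD⟩ ((hφcont k).continuousOn)
    exact ⟨mm, hmm, fun p hp => hmin hp⟩
  choose m hmD hmmin using hmins
  have hφqq : ∀ k : ℕ, φ k (q, q) = 0 := by
    intro k
    simp only [hφdef, sub_self, pnorm_zero, pinner_zero_right, hs_q]
    ring
  have hm0 : ∀ k : ℕ, φ k (m k) ≤ 0 := fun k => (hφqq k) ▸ hmmin k (q, q) hqD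
  have hma : ∀ k : ℕ, (m k).1 ∈ S₁ := fun k => (hmD k).1.1
  have hmb : ∀ k : ℕ, (m k).2 ∈ S₂ := fun k => (hmD k).2.1
  have hmaB : ∀ k : ℕ, pnorm ((m k).1 - q) ≤ δ := fun k => (hmD k).1.2
  have hmbB : ∀ k : ℕ, pnorm ((m k).2 - q) ≤ δ := fun k => (hmD k).2.2
  have hterm : ∀ k : ℕ, ((k : ℝ) + 1) * pnorm ((m k).1 - (m k).2) ^ 2 ≤ pnorm w * δ := by
    intro k
    have h0 := hm0 k
    have h1 : pinner w ((m k).1 - q) ≤ pnorm w * δ :=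
      le_trans (pinner_le _ _) (mul_le_mul_of_nonneg_left (hmaB k) (pnorm_nonneg _))
    have h2 : 0 ≤ ε₀ * (sfun (m k).1 - t) :=
      mul_nonneg hε₀pos.le (by linarith [hs_ge_t (m k).1])
    have h3 : 0 ≤ pnorm ((m k).1 - q) ^ 2 := sq_nonneg _
    simp only [hφdef] at h0
    linarith
  have hk1 : Tendsto (fun k : ℕ => ((k : ℝ) + 1)) atTop atTop :=
    tendsto_atTop_add_const_right _ 1 tendsto_natCast_atTop_atTop
  have hC0 : Tendsto (fun k : ℕ => pnorm w * δ / ((k : ℝ) + 1)) atTop (𝓝 0) := by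
    have := hk1.inv_tendsto_atTop
    have h2 := this.const_mul (pnorm w * δ)
    simpa [div_eq_mul_inv, mul_zero] using h2
  have hΔsq : ∀ k : ℕ, pnorm ((m k).1 - (m k).2) ^ 2 ≤ pnorm w * δ / ((k : ℝ) + 1) := by
    intro k
    rw [le_div_iff₀ (by positivity)]
    linarith [hterm k]
  have hΔ0 : Tendsto (fun k => pnorm ((m k).1 - (m k).2)) atTop (𝓝 0) := by
    have hsq0 : Tendsto (fun k => pnorm ((m k).1 - (m k).2) ^ 2) atTop (𝓝 0) :=
      squeeze_zero (fun k => sq_nonneg _) hΔsq hC0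
    have h2 := (Real.continuous_sqrt.tendsto 0).comp hsq0
    rw [Real.sqrt_zero] at h2
    have h3 : (Real.sqrt ∘ fun k => pnorm ((m k).1 - (m k).2) ^ 2)
        = fun k => pnorm ((m k).1 - (m k).2) := by
      funext k
      exact Real.sqrt_sq (pnorm_nonneg _)
    rwa [h3] at h2
  obtain ⟨mb, hmbD2, ψ, hψ, hψt⟩ := hDc.tendsto_subseq hmD
  have hta : Tendsto (fun j => (m (ψ j)).1) atTop (𝓝 mb.1) := (continuous_fst.tendsto mb).comp hψt
  have htb : Tendsto (fun j => (m (ψ j)).2) atTop (𝓝 mb.2) := (continuous_snd.tendsto mb).comp hψt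
  have hab : mb.1 = mb.2 := by
    have h1 : Tendsto (fun j => pnorm ((m (ψ j)).1 - (m (ψ j)).2)) atTop
        (𝓝 (pnorm (mb.1 - mb.2))) := (continuous_pnorm.tendsto _).comp (hta.sub htb)
    have h2 : Tendsto (fun j => pnorm ((m (ψ j)).1 - (m (ψ j)).2)) atTop (𝓝 0) :=
      hΔ0.comp hψ.tendsto_atTop
    have := tendsto_nhds_unique h1 h2
    exact sub_eq_zero.mp (pnorm_eq_zero.mp this)
  have hlimS : mb.1 ∈ S₁ ∩ S₂ := ⟨hmbD2.1.1, by rw [hab]; exact hmbD2.2.1⟩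
  have hlimB : pnorm (mb.1 - q) ≤ δ := hmbD2.1.2
  set g : (Eu n × ℝ) → ℝ :=
    fun p => -pinner w (p - q) + ε₀ * (sfun p - t) + pnorm (p - q) ^ 2 with hgdef
  have hgcont : Continuous g := by
    apply Continuous.add
    apply Continuous.add
    · exact ((continuous_pinner_right w).comp (continuous_id.sub continuous_const)).neg
    · exact continuous_const.mul (csfun.sub continuous_const)
    · exact cpnq.pow 2
  have hgk : ∀ k : ℕ, g ((m k).1) ≤ 0 := by
    intro k
    have h0 := hm0 k
    have h4 : 0 ≤ ((k : ℝ) + 1) * pnorm ((m k).1 - (m k).2) ^ 2 := by positivity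
    simp only [hφdef] at h0
    simp only [hgdef]
    linarith
  have hglim : g mb.1 ≤ 0 :=
    le_of_tendsto ((hgcont.tendsto _).comp hta) (Filter.Eventually.of_forall fun j => hgk (ψ j))
  have hin : pinner w (mb.1 - q) ≤ ε₀ * pnorm (mb.1 - q) :=
    hineq _ hlimS (lt_of_le_of_lt hlimB hδδ')
  have hlim2 : pnorm (mb.1 - q) ^ 2 ≤ ε₀ * t := by
    have h1 := hs_ge mb.1
    simp only [hgdef] at hglim
    nlinarith [hε₀pos]
  have hlimlt : pnorm (mb.1 - q) < δ := by
    nlinarith [pnorm_nonneg (mb.1 - q), hδpos, hlim2, het]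
  have hev : ∀ᶠ j in atTop,
      pnorm ((m (ψ j)).1 - q) < δ ∧ pnorm ((m (ψ j)).2 - q) < δ := by
    have e1 : Tendsto (fun j => pnorm ((m (ψ j)).1 - q)) atTop (𝓝 (pnorm (mb.1 - q))) :=
      (cpnq.tendsto mb.1).comp hta
    have e2 : Tendsto (fun j => pnorm ((m (ψ j)).2 - q)) atTop (𝓝 (pnorm (mb.2 - q))) :=
      (cpnq.tendsto mb.2).comp htb
    have hblt : pnorm (mb.2 - q) < δ := by rw [← hab]; exact hlimlt
    exact (e1.eventually_lt_const hlimlt).and (e2.eventually_lt_const hblt)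
  obtain ⟨j, hj1, hj2⟩ := hev.exists
  set k : ℕ := ψ j with hkdef
  set a : Eu n × ℝ := (m k).1 with hadef
  set b : Eu n × ℝ := (m k).2 with hbdef
  set u₂ : Eu n × ℝ := (2 * ((k : ℝ) + 1)) • (a - b) with hu₂def
  have hu₂mem : u₂ ∈ frechetNCP S₂ b := by
    have hmin2 : ∀ p ∈ S₂, pnorm (p - b) < δ - pnorm (b - q) →
        ((k : ℝ) + 1) * pnorm (a - b) ^ 2 ≤ ((k : ℝ) + 1) * pnorm (a - p) ^ 2 := by
      intro p hp hlt
      have hpB : p ∈ Bs := by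
        simp only [hBs, Set.mem_setOf_eq]
        have htr : pnorm (p - q) ≤ pnorm (p - b) + pnorm (b - q) := by
          have : p - q = (p - b) + (b - q) := by abel
          rw [this]; exact pnorm_add_le _ _
        linarith
      have hmem : ((a, p) : (Eu n × ℝ) × (Eu n × ℝ)) ∈ D := ⟨⟨hma k, hmaB k⟩, hp, hpB⟩
      have := hmmin k (a, p) hmem
      simp only [hφdef] at this
      linarith
    have hexp2 : ∀ p, ((k : ℝ) + 1) * pnorm (a - p) ^ 2 - ((k : ℝ) + 1) * pnorm (a - b) ^ 2
        ≤ pinner ((-(2 * ((k : ℝ) + 1))) • (a - b)) (p - b) + ((k : ℝ) + 1) * pnorm (p - b) ^ 2 := by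
      intro p
      have hrw : a - p = (a - b) - (p - b) := by abel
      rw [hrw, pnorm_sub_sq, pinner_smul_left]
      have : pnorm ((a - b) - (p - b)) = pnorm (a - p) := by rw [← hrw]
      ring_nf
      nlinarith [le_refl (0:ℝ)]
    have h := frechetNCP_of_min (S := S₂) (q₀ := b)
      (g := (-(2 * ((k : ℝ) + 1))) • (a - b))
      (ψ := fun p => ((k : ℝ) + 1) * pnorm (a - p) ^ 2) (ρ := δ - pnorm (b - q))
      (C := (k : ℝ) + 1) (hmb k) (by linarith [hj2]) hmin2 hexp2
    rwa [neg_smul, neg_neg] at h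
  set gr : Eu n × ℝ := (sfun a)⁻¹ • (a - q) with hgrdef
  set u₁ : Eu n × ℝ := w - ε₀ • gr - u₂ - (2:ℝ) • (a - q) with hu₁def
  set ψ₁ : (Eu n × ℝ) → ℝ := fun p => -pinner w (p - q) + ε₀ * (sfun p - t)
    + ((k : ℝ) + 1) * pnorm (p - b) ^ 2 + pnorm (p - q) ^ 2 with hψ₁def
  have hu₁mem : u₁ ∈ frechetNCP S₁ a := by
    have hmin1 : ∀ p ∈ S₁, pnorm (p - a) < δ - pnorm (a - q) → ψ₁ a ≤ ψ₁ p := by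
      intro p hp hlt
      have hpB : p ∈ Bs := by
        simp only [hBs, Set.mem_setOf_eq]
        have htr : pnorm (p - q) ≤ pnorm (p - a) + pnorm (a - q) := by
          rw [show p - q = (p - a) + (a - q) from by abel]
          exact pnorm_add_le _ _
        linarith
      have hmem : ((p, b) : (Eu n × ℝ) × (Eu n × ℝ)) ∈ D := ⟨⟨hp, hpB⟩, hmb k, hmbB k⟩
      have h0 := hmmin k (p, b) hmem
      rw [show m k = (a, b) from rfl] at h0
      simp only [hφdef] at h0
      simp only [hψ₁def]
      linarith
    have hexp1 : ∀ p, ψ₁ p - ψ₁ a ≤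
        pinner (-w + ε₀ • gr + (2 * ((k : ℝ) + 1)) • (a - b) + (2:ℝ) • (a - q)) (p - a)
          + (ε₀ * (1 / t) + ((k : ℝ) + 1) + 1) * pnorm (p - a) ^ 2 := by
      intro p
      have hT1 : pinner w (p - q) - pinner w (a - q) = pinner w (p - a) := by
        rw [← pinner_sub_right]; congr 1; abel
      have hT2 : sfun p - sfun a ≤ pinner gr (p - a) + 1 / t * pnorm (p - a) ^ 2 := by
        simp only [hsfun, hgrdef]
        exact sqfun_upper htpos
      have hT2' : ε₀ * (sfun p - sfun a)
          ≤ ε₀ * (pinner gr (p - a) + 1 / t * pnorm (p - a) ^ 2) :=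
        mul_le_mul_of_nonneg_left hT2 hε₀pos.le
      have hT3 : pnorm (p - b) ^ 2
          = pnorm (a - b) ^ 2 + 2 * pinner (a - b) (p - a) + pnorm (p - a) ^ 2 := by
        rw [show p - b = (a - b) + (p - a) from by abel, pnorm_add_sq]
      have hT4 : pnorm (p - q) ^ 2
          = pnorm (a - q) ^ 2 + 2 * pinner (a - q) (p - a) + pnorm (p - a) ^ 2 := by
        rw [show p - q = (a - q) + (p - a) from by abel, pnorm_add_sq]
      have hpin : pinner (-w + ε₀ • gr + (2 * ((k : ℝ) + 1)) • (a - b) + (2:ℝ) • (a - q)) (p - a)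
          = -pinner w (p - a) + ε₀ * pinner gr (p - a)
            + (2 * ((k : ℝ) + 1)) * pinner (a - b) (p - a) + 2 * pinner (a - q) (p - a) := by
        simp only [pinner_add_left, pinner_neg_left, pinner_smul_left]
      simp only [hψ₁def]
      rw [hpin, hT3, hT4]
      nlinarith [hT1, hT2', sq_nonneg (pnorm (p - a))]
    have h := frechetNCP_of_min (S := S₁) (q₀ := a)
      (g := -w + ε₀ • gr + (2 * ((k : ℝ) + 1)) • (a - b) + (2:ℝ) • (a - q))
      (ψ := ψ₁) (ρ := δ - pnorm (a - q)) (C := ε₀ * (1 / t) + ((k : ℝ) + 1) + 1)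
      (hma k) (by linarith [hj1]) hmin1 hexp1
    have heq : u₁ = -(-w + ε₀ • gr + (2 * ((k : ℝ) + 1)) • (a - b) + (2:ℝ) • (a - q)) := by
      rw [hu₁def, hu₂def]; module
    rwa [← heq] at h
  refine ⟨a, b, u₁, u₂, hu₁mem, hu₂mem, ?_, ?_, ?_⟩
  · exact le_trans (hmaB k) (by linarith)
  · exact le_trans (hmbB k) (by linarith)
  · have hwsub : w - u₁ - u₂ = ε₀ • gr + (2:ℝ) • (a - q) := by
      rw [hu₁def]; module
    rw [hwsub]
    have hsa : 0 < sfun a := lt_of_lt_of_le htpos (hs_ge_t a)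
    have h1 : pnorm (ε₀ • gr) ≤ ε₀ := by
      rw [pnorm_smul, hgrdef, pnorm_smul]
      rw [abs_of_pos hε₀pos, abs_of_pos (inv_pos.mpr hsa)]
      calc ε₀ * ((sfun a)⁻¹ * pnorm (a - q)) ≤ ε₀ * 1 := by
            apply mul_le_mul_of_nonneg_left _ hε₀pos.le
            rw [← div_eq_inv_mul]
            exact div_le_one_of_le₀ (hs_ge a) hsa.le
        _ = ε₀ := mul_one _
    have h2 : pnorm ((2:ℝ) • (a - q)) ≤ 2 * δ := by
      rw [pnorm_smul, abs_of_nonneg (by norm_num : (0:ℝ) ≤ 2)]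
      exact mul_le_mul_of_nonneg_left (hmaB k) (by norm_num)
    calc pnorm (ε₀ • gr + (2:ℝ) • (a - q)) ≤ pnorm (ε₀ • gr) + pnorm ((2:ℝ) • (a - q)) :=
          pnorm_add_le _ _
      _ ≤ ε₀ + 2 * δ := add_le_add h1 h2
      _ ≤ ε := by rw [hε₀]; linarith





lemma tendstoDirInfty_comp {x : ℕ → Eu n} {u : Eu n} (hx : TendstoDirInfty x u)
    {ρ : ℕ → ℕ} (hρ : StrictMono ρ) : TendstoDirInfty (x ∘ ρ) u :=
  ⟨hx.1.comp hρ.tendsto_atTop, hx.2.comp hρ.tendsto_atTop⟩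

lemma tendstoDirInfty_of_close {x y : ℕ → Eu n} {u : Eu n} (hx : TendstoDirInfty x u)
    (hclose : Tendsto (fun k => ‖y k - x k‖) atTop (𝓝 0)) : TendstoDirInfty y u := by
  have hnormy : Tendsto (fun k => ‖y k‖) atTop atTop := by
    have h1 : Tendsto (fun k => ‖x k‖ + -‖y k - x k‖) atTop atTop :=
      hx.1.atTop_add (hclose.neg)
    apply tendsto_atTop_mono _ h1
    intro k
    have := norm_sub_norm_le (x k) (y k)
    have h2 : ‖x k - y k‖ = ‖y k - x k‖ := norm_sub_rev _ _
    linarith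
  constructor
  · exact hnormy
  · have hev : ∀ᶠ k in atTop, 0 < ‖x k‖ ∧ 0 < ‖y k‖ :=
      (hx.1.eventually_gt_atTop 0).and (hnormy.eventually_gt_atTop 0)
    have hbound : ∀ᶠ k in atTop,
        ‖(‖y k‖⁻¹ • y k) - (‖x k‖⁻¹ • x k)‖ ≤ 2 * ‖y k - x k‖ * ‖y k‖⁻¹ := by
      filter_upwards [hev] with k hk
      obtain ⟨hxk, hyk⟩ := hk
      have hdecomp : ‖y k‖⁻¹ • y k - ‖x k‖⁻¹ • x k
          = ‖y k‖⁻¹ • (y k - x k) + (‖y k‖⁻¹ - ‖x k‖⁻¹) • x k := by module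
      rw [hdecomp]
      have ht1 : ‖(‖y k‖⁻¹ : ℝ) • (y k - x k)‖ = ‖y k‖⁻¹ * ‖y k - x k‖ := by
        rw [norm_smul, Real.norm_eq_abs, abs_of_pos (inv_pos.mpr hyk)]
      have ht2 : ‖((‖y k‖⁻¹ - ‖x k‖⁻¹ : ℝ)) • x k‖ ≤ ‖y k - x k‖ * ‖y k‖⁻¹ := by
        rw [norm_smul, Real.norm_eq_abs]
        have habs : |‖y k‖⁻¹ - ‖x k‖⁻¹| = |‖x k‖ - ‖y k‖| / (‖x k‖ * ‖y k‖) := by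
          rw [show ‖y k‖⁻¹ - ‖x k‖⁻¹ = (‖x k‖ - ‖y k‖) / (‖x k‖ * ‖y k‖) from by
            field_simp]
          rw [abs_div, abs_of_pos (mul_pos hxk hyk)]
        rw [habs]
        have hrev : |‖x k‖ - ‖y k‖| ≤ ‖y k - x k‖ := by
          have := abs_norm_sub_norm_le (x k) (y k)
          rwa [norm_sub_rev] at this
        calc |‖x k‖ - ‖y k‖| / (‖x k‖ * ‖y k‖) * ‖x k‖
            = |‖x k‖ - ‖y k‖| * ‖y k‖⁻¹ := by field_simp
          _ ≤ ‖y k - x k‖ * ‖y k‖⁻¹ :=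
              mul_le_mul_of_nonneg_right hrev (inv_nonneg.mpr hyk.le)
      calc ‖(‖y k‖⁻¹:ℝ) • (y k - x k) + ((‖y k‖⁻¹ - ‖x k‖⁻¹ : ℝ)) • x k‖
          ≤ ‖(‖y k‖⁻¹:ℝ) • (y k - x k)‖ + ‖((‖y k‖⁻¹ - ‖x k‖⁻¹ : ℝ)) • x k‖ := norm_add_le _ _
        _ ≤ ‖y k‖⁻¹ * ‖y k - x k‖ + ‖y k - x k‖ * ‖y k‖⁻¹ := by rw [ht1]; linarith [ht2]
        _ = 2 * ‖y k - x k‖ * ‖y k‖⁻¹ := by ring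
    have hrhs : Tendsto (fun k => 2 * ‖y k - x k‖ * ‖y k‖⁻¹) atTop (𝓝 0) := by
      have h1 : Tendsto (fun k => ‖y k‖⁻¹) atTop (𝓝 0) := hnormy.inv_tendsto_atTop
      have h2 := (hclose.const_mul 2).mul h1
      simpa using h2
    have hdiff : Tendsto (fun k => (‖y k‖⁻¹ • y k) - (‖x k‖⁻¹ • x k)) atTop (𝓝 0) := by
      rw [tendsto_zero_iff_norm_tendsto_zero]
      exact squeeze_zero' (Filter.Eventually.of_forall fun k => norm_nonneg _) hbound hrhs
    have := hdiff.add hx.2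
    simpa using this

/-- generalized directional subdifferential at infinity with last component `σ` -/
def genSub (f : Eu n → EReal) (u : Eu n) (σ : ℝ) : Set (Eu n) :=
  {ζ | ∃ (x : ℕ → Eu n) (r : ℕ → ℝ) (w : ℕ → Eu n × ℝ),
      TendstoDirInfty x u ∧ (∀ k, f (x k) ≤ ((r k : ℝ) : EReal)) ∧
      (∀ k, w k ∈ frechetNCP (epigraph f) (x k, r k)) ∧
      Tendsto w atTop (𝓝 (ζ, -σ))}

lemma genSub_zero (f : Eu n → EReal) (u : Eu n) : genSub f u 0 = dirSingSubdiffInfty f u := by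
  simp [genSub, dirSingSubdiffInfty, neg_zero]

lemma genSub_one (f : Eu n → EReal) (u : Eu n) : genSub f u 1 = dirSubdiffInfty f u := by
  simp [genSub, dirSubdiffInfty]

lemma genSub_scale {f : Eu n → EReal} {u : Eu n} {σ : ℝ} (hσ : 0 < σ) {ζ : Eu n}
    (h : ζ ∈ genSub f u σ) : ζ ∈ σ • dirSubdiffInfty f u := by
  obtain ⟨x, r, w, hx, hr, hw, hlim⟩ := h
  refine Set.mem_smul_set.mpr ⟨σ⁻¹ • ζ, ⟨x, r, fun k => σ⁻¹ • w k, hx, hr,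
    fun k => frechetNCP_smul (inv_pos.mpr hσ) (hw k), ?_⟩, smul_inv_smul₀ hσ.ne' ζ⟩
  have h2 := hlim.const_smul σ⁻¹
  have h3 : σ⁻¹ • ((ζ, -σ) : Eu n × ℝ) = (σ⁻¹ • ζ, (-1 : ℝ)) := by
    rw [Prod.smul_mk]
    congr 1
    simp [smul_eq_mul]
    field_simp
  rwa [h3] at h2

/-- membership in `genSub` from a sequence of Fréchet normals at nearby epigraph points -/
lemma mem_genSub_aux {f : Eu n → EReal} {u : Eu n} {x : ℕ → Eu n} {r : ℕ → ℝ}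
    (hx : TendstoDirInfty x u)
    {p : ℕ → Eu n × ℝ} (hclose : Tendsto (fun k => pnorm (p k - (x k, r k))) atTop (𝓝 0))
    {V : ℕ → Eu n × ℝ} (hV : ∀ k, V k ∈ frechetNCP (epigraph f) (p k))
    {L : Eu n × ℝ} (hL : Tendsto V atTop (𝓝 L)) :
    L.1 ∈ genSub f u (-L.2) := by
  refine ⟨fun k => (p k).1, fun k => (p k).2, V, ?_, ?_, ?_, ?_⟩
  · apply tendstoDirInfty_of_close hx
    apply squeeze_zero (fun k => norm_nonneg _) (fun k => ?_) hclose
    have h1 : ((p k) - (x k, r k)).1 = (p k).1 - x k := rfl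
    calc ‖(p k).1 - x k‖ = ‖((p k) - (x k, r k)).1‖ := by rw [h1]
      _ ≤ pnorm ((p k) - (x k, r k)) := fst_norm_le_pnorm _
  · exact fun k => (hV k).1
  · exact fun k => hV k
  · simpa using hL

set_option maxHeartbeats 2000000 in
lemma key {n : ℕ} (f₁ f₂ : Eu n → EReal)
    (hf₁ : LowerSemicontinuous f₁) (hf₂ : LowerSemicontinuous f₂)
    (u : Eu n)
    (hqc : dirSingSubdiffInfty f₁ u ∩ -dirSingSubdiffInfty f₂ u = {0})
    (ξ : Eu n) (s : ℝ)
    (x : ℕ → Eu n) (r : ℕ → ℝ) (w : ℕ → Eu n × ℝ)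
    (hx : TendstoDirInfty x u)
    (hw : ∀ k, w k ∈ frechetNCP (epigraph fun y => max (f₁ y) (f₂ y)) (x k, r k))
    (hlim : Tendsto w atTop (𝓝 (ξ, -s))) :
    ∃ ζ₁ ζ₂ σ₁ σ₂, 0 ≤ σ₁ ∧ 0 ≤ σ₂ ∧ σ₁ + σ₂ = s ∧ ζ₁ + ζ₂ = ξ ∧
      ζ₁ ∈ genSub f₁ u σ₁ ∧ ζ₂ ∈ genSub f₂ u σ₂ := by
  have hcl₁ := epigraph_closed hf₁
  have hcl₂ := epigraph_closed hf₂
  have hepi := epigraph_max f₁ f₂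
  have hfz : ∀ k : ℕ, ∃ q₁ q₂ v₁ v₂, v₁ ∈ frechetNCP (epigraph f₁) q₁ ∧
      v₂ ∈ frechetNCP (epigraph f₂) q₂ ∧ pnorm (q₁ - (x k, r k)) ≤ ((k : ℝ) + 1)⁻¹ ∧
      pnorm (q₂ - (x k, r k)) ≤ ((k : ℝ) + 1)⁻¹ ∧ pnorm (w k - v₁ - v₂) ≤ ((k : ℝ) + 1)⁻¹ := by
    intro k
    have hwk := hw k
    rw [hepi] at hwk
    exact fuzzy hcl₁ hcl₂ hwk (by positivity)
  choose p₁ p₂ U₁ U₂ hU₁ hU₂ hd₁ hd₂ hdw using hfz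
  have hinv0 : Tendsto (fun k : ℕ => ((k : ℝ) + 1)⁻¹) atTop (𝓝 0) :=
    (tendsto_atTop_add_const_right _ 1 tendsto_natCast_atTop_atTop).inv_tendsto_atTop
  have hd₁0 : Tendsto (fun k => pnorm (p₁ k - (x k, r k))) atTop (𝓝 0) :=
    squeeze_zero (fun k => pnorm_nonneg _) hd₁ hinv0
  have hd₂0 : Tendsto (fun k => pnorm (p₂ k - (x k, r k))) atTop (𝓝 0) :=
    squeeze_zero (fun k => pnorm_nonneg _) hd₂ hinv0
  have hsum : Tendsto (fun k => U₁ k + U₂ k) atTop (𝓝 (ξ, -s)) := by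
    have herr : Tendsto (fun k => w k - U₁ k - U₂ k) atTop (𝓝 0) := by
      rw [tendsto_zero_iff_norm_tendsto_zero]
      exact squeeze_zero (fun k => norm_nonneg _)
        (fun k => le_trans (prod_norm_le_pnorm _) (hdw k)) hinv0
    have h2 := hlim.sub herr
    have heq : (fun k => w k - (w k - U₁ k - U₂ k)) = fun k => U₁ k + U₂ k :=
      funext fun k => by abel
    rwa [heq, sub_zero] at h2
  have hsnd₁ : ∀ k, (U₁ k).2 ≤ 0 := fun k => frechetNCP_epigraph_snd (hU₁ k)
  have hsnd₂ : ∀ k, (U₂ k).2 ≤ 0 := fun k => frechetNCP_epigraph_snd (hU₂ k)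
  set mf : ℕ → ℝ := fun k => max (pnorm (U₁ k)) (pnorm (U₂ k)) with hmfdef
  by_cases hbd : ∀ M : ℝ, ∀ᶠ k in atTop, M < mf k
  · -- unbounded case: contradict the qualification condition
    exfalso
    have htop : Tendsto mf atTop atTop := tendsto_atTop.mpr fun M => ((hbd M).mono fun k h => h.le)
    obtain ⟨N, hN⟩ := Filter.eventually_atTop.mp (htop.eventually_ge_atTop 1)
    set ψ : ℕ → ℕ := fun j => j + N with hψdef
    have hψmono : StrictMono ψ := fun i j hij => by simp only [hψdef]; omega
    have hm1 : ∀ j, 1 ≤ mf (ψ j) := fun j => hN _ (Nat.le_add_left N j)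
    have hmpos : ∀ j, 0 < mf (ψ j) := fun j => lt_of_lt_of_le one_pos (hm1 j)
    set v₁ : ℕ → Eu n × ℝ := fun j => (mf (ψ j))⁻¹ • U₁ (ψ j) with hv₁def
    set v₂ : ℕ → Eu n × ℝ := fun j => (mf (ψ j))⁻¹ • U₂ (ψ j) with hv₂def
    have hv₁b : ∀ j, v₁ j ∈ Metric.closedBall (0 : Eu n × ℝ) 1 := by
      intro j
      rw [Metric.mem_closedBall, dist_zero_right]
      refine le_trans (prod_norm_le_pnorm _) ?_
      rw [hv₁def]
      rw [pnorm_smul, abs_of_pos (inv_pos.mpr (hmpos j)), ← div_eq_inv_mul]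
      exact div_le_one_of_le₀ (le_max_left _ _) (hmpos j).le
    have hv₂b : ∀ j, v₂ j ∈ Metric.closedBall (0 : Eu n × ℝ) 1 := by
      intro j
      rw [Metric.mem_closedBall, dist_zero_right]
      refine le_trans (prod_norm_le_pnorm _) ?_
      rw [hv₂def]
      rw [pnorm_smul, abs_of_pos (inv_pos.mpr (hmpos j)), ← div_eq_inv_mul]
      exact div_le_one_of_le₀ (le_max_right _ _) (hmpos j).le
    obtain ⟨L₁, _, θ₁, hθ₁, hv₁t⟩ :=
      tendsto_subseq_of_bounded Metric.isBounded_closedBall hv₁b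
    obtain ⟨L₂, _, θ₂, hθ₂, hv₂t⟩ :=
      tendsto_subseq_of_bounded Metric.isBounded_closedBall (fun j => hv₂b (θ₁ j))
    set τ : ℕ → ℕ := fun j => θ₁ (θ₂ j) with hτdef
    have hτmono : StrictMono τ := hθ₁.comp hθ₂
    have hv₁t2 : Tendsto (fun j => v₁ (τ j)) atTop (𝓝 L₁) := hv₁t.comp hθ₂.tendsto_atTop
    have hv₂t2 : Tendsto (fun j => v₂ (τ j)) atTop (𝓝 L₂) := hv₂t
    set ρ : ℕ → ℕ := fun j => ψ (τ j) with hρdef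
    have hρmono : StrictMono ρ := hψmono.comp hτmono
    have hmi0 : Tendsto (fun j => (mf (ρ j))⁻¹) atTop (𝓝 0) :=
      (htop.comp hρmono.tendsto_atTop).inv_tendsto_atTop
    have hsum2 : Tendsto (fun j => v₁ (τ j) + v₂ (τ j)) atTop (𝓝 0) := by
      have hUc : Tendsto (fun j => U₁ (ρ j) + U₂ (ρ j)) atTop (𝓝 (ξ, -s)) :=
        hsum.comp hρmono.tendsto_atTop
      have h2 := hmi0.smul hUc
      rw [zero_smul] at h2
      have heq : (fun j => v₁ (τ j) + v₂ (τ j))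
          = fun j => (mf (ρ j))⁻¹ • (U₁ (ρ j) + U₂ (ρ j)) :=
        funext fun j => by rw [hv₁def, hv₂def, smul_add]
      rwa [heq]
    have hLsum : L₁ + L₂ = 0 := tendsto_nhds_unique (hv₁t2.add hv₂t2) hsum2
    have hnorm1 : max (pnorm L₁) (pnorm L₂) = 1 := by
      have hc : Tendsto (fun j => max (pnorm (v₁ (τ j))) (pnorm (v₂ (τ j)))) atTop
          (𝓝 (max (pnorm L₁) (pnorm L₂))) :=
        ((continuous_pnorm.tendsto L₁).comp hv₁t2).max ((continuous_pnorm.tendsto L₂).comp hv₂t2)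
      have hval : ∀ j, max (pnorm (v₁ (τ j))) (pnorm (v₂ (τ j))) = 1 := by
        intro j
        rw [hv₁def, hv₂def, pnorm_smul, pnorm_smul,
          abs_of_pos (inv_pos.mpr (hmpos (τ j)))]
        rw [← mul_max_of_nonneg _ _ (inv_pos.mpr (hmpos (τ j))).le]
        exact inv_mul_cancel₀ (hmpos (τ j)).ne'
      rw [show (fun j => max (pnorm (v₁ (τ j))) (pnorm (v₂ (τ j)))) = fun _ => (1:ℝ) from
        funext hval] at hc
      exact tendsto_nhds_unique hc tendsto_const_nhds
    have hL₁2 : L₁.2 ≤ 0 := by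
      apply le_of_tendsto ((continuous_snd.tendsto L₁).comp hv₁t2)
      apply Filter.Eventually.of_forall
      intro j
      show (v₁ (τ j)).2 ≤ 0
      rw [hv₁def]
      exact mul_nonpos_of_nonneg_of_nonpos (inv_pos.mpr (hmpos (τ j))).le (hsnd₁ _)
    have hL₂2 : L₂.2 ≤ 0 := by
      apply le_of_tendsto ((continuous_snd.tendsto L₂).comp hv₂t2)
      apply Filter.Eventually.of_forall
      intro j
      show (v₂ (τ j)).2 ≤ 0
      rw [hv₂def]
      exact mul_nonpos_of_nonneg_of_nonpos (inv_pos.mpr (hmpos (τ j))).le (hsnd₂ _)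
    have hsnd0 : L₁.2 + L₂.2 = 0 := by
      have := congrArg Prod.snd hLsum
      simpa using this
    have hL₁20 : L₁.2 = 0 := by linarith
    have hL₂20 : L₂.2 = 0 := by linarith
    have hmem₁ : L₁.1 ∈ genSub f₁ u (-L₁.2) :=
      mem_genSub_aux (tendstoDirInfty_comp hx hρmono)
        (hd₁0.comp hρmono.tendsto_atTop)
        (fun j => frechetNCP_smul (inv_pos.mpr (hmpos (τ j))) (hU₁ (ρ j))) hv₁t2
    have hmem₂ : L₂.1 ∈ genSub f₂ u (-L₂.2) :=
      mem_genSub_aux (tendstoDirInfty_comp hx hρmono)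
        (hd₂0.comp hρmono.tendsto_atTop)
        (fun j => frechetNCP_smul (inv_pos.mpr (hmpos (τ j))) (hU₂ (ρ j))) hv₂t2
    rw [hL₁20, neg_zero, genSub_zero] at hmem₁
    rw [hL₂20, neg_zero, genSub_zero] at hmem₂
    have hfst0 : L₁.1 + L₂.1 = 0 := by
      have := congrArg Prod.fst hLsum
      simpa using this
    have hInt : L₁.1 ∈ dirSingSubdiffInfty f₁ u ∩ -dirSingSubdiffInfty f₂ u := by
      refine ⟨hmem₁, Set.mem_neg.mpr ?_⟩
      rw [show -L₁.1 = L₂.1 from by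
        have := hfst0; exact (neg_eq_of_add_eq_zero_right this).symm ▸ rfl]
      exact hmem₂
    rw [hqc] at hInt
    have hL₁10 : L₁.1 = 0 := hInt
    have hLL : L₂ = -L₁ := by
      have : L₁ + L₂ = 0 := hLsum
      linear_combination (norm := module) this
    have hpn : pnorm L₂ = pnorm L₁ := by rw [hLL, pnorm_neg]
    have hp1 : pnorm L₁ = 1 := by
      rw [hpn, max_self] at hnorm1
      exact hnorm1
    have hL₁z : L₁ = 0 := by
      have : L₁ = (L₁.1, L₁.2) := rfl
      rw [this, hL₁10, hL₁20]
      rfl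
    rw [hL₁z, pnorm_zero] at hp1
    norm_num at hp1
  · -- bounded case
    push_neg at hbd
    obtain ⟨M, hM⟩ := hbd
    have hfreq : ∃ᶠ k in atTop, mf k ≤ M := by
      have h2 := Filter.not_eventually.mp hM
      exact h2.mono fun k h => not_not.mp h
    obtain ⟨ψ, hψmono, hψle⟩ := Filter.extraction_of_frequently_atTop hfreq
    have hU₁b : ∀ j, U₁ (ψ j) ∈ Metric.closedBall (0 : Eu n × ℝ) M := by
      intro j
      rw [Metric.mem_closedBall, dist_zero_right]
      exact le_trans (prod_norm_le_pnorm _) (le_trans (le_max_left _ _) (hψle j))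
    obtain ⟨L₁, _, θ₁, hθ₁, hU₁t⟩ :=
      tendsto_subseq_of_bounded Metric.isBounded_closedBall hU₁b
    have hU₂b : ∀ j, U₂ (ψ (θ₁ j)) ∈ Metric.closedBall (0 : Eu n × ℝ) M := by
      intro j
      rw [Metric.mem_closedBall, dist_zero_right]
      exact le_trans (prod_norm_le_pnorm _) (le_trans (le_max_right _ _) (hψle (θ₁ j)))
    obtain ⟨L₂, _, θ₂, hθ₂, hU₂t⟩ :=
      tendsto_subseq_of_bounded Metric.isBounded_closedBall hU₂b
    set ρ : ℕ → ℕ := fun j => ψ (θ₁ (θ₂ j)) with hρdef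
    have hρmono : StrictMono ρ := hψmono.comp (hθ₁.comp hθ₂)
    have hU₁t2 : Tendsto (fun j => U₁ (ρ j)) atTop (𝓝 L₁) := hU₁t.comp hθ₂.tendsto_atTop
    have hU₂t2 : Tendsto (fun j => U₂ (ρ j)) atTop (𝓝 L₂) := hU₂t
    have hLsum : L₁ + L₂ = (ξ, -s) :=
      tendsto_nhds_unique (hU₁t2.add hU₂t2) (hsum.comp hρmono.tendsto_atTop)
    have hL₁2 : L₁.2 ≤ 0 :=
      le_of_tendsto ((continuous_snd.tendsto L₁).comp hU₁t2)
        (Filter.Eventually.of_forall fun j => hsnd₁ (ρ j))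
    have hL₂2 : L₂.2 ≤ 0 :=
      le_of_tendsto ((continuous_snd.tendsto L₂).comp hU₂t2)
        (Filter.Eventually.of_forall fun j => hsnd₂ (ρ j))
    have hsnd : L₁.2 + L₂.2 = -s := by
      have := congrArg Prod.snd hLsum
      simpa using this
    have hfst : L₁.1 + L₂.1 = ξ := by
      have := congrArg Prod.fst hLsum
      simpa using this
    refine ⟨L₁.1, L₂.1, -L₁.2, -L₂.2, by linarith, by linarith, by linarith, hfst, ?_, ?_⟩
    · exact mem_genSub_aux (tendstoDirInfty_comp hx hρmono)
        (hd₁0.comp hρmono.tendsto_atTop) (fun j => hU₁ (ρ j)) hU₁t2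
    · exact mem_genSub_aux (tendstoDirInfty_comp hx hρmono)
        (hd₂0.comp hρmono.tendsto_atTop) (fun j => hU₂ (ρ j)) hU₂t2

/-- Maximum rule for directional subdifferentials at infinity. -/
theorem dirSubdiffInfty_max_rule {n : ℕ} (f₁ f₂ : Eu n → EReal)
    (hf₁ : LowerSemicontinuous f₁) (hf₂ : LowerSemicontinuous f₂)
    (hb₁ : ∀ x, f₁ x ≠ ⊥) (hb₂ : ∀ x, f₂ x ≠ ⊥)
    (u : Eu n) (hu1 : ‖u‖ = 1)
    (hqc : dirSingSubdiffInfty f₁ u ∩ -dirSingSubdiffInfty f₂ u = {0}) :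
    (dirSubdiffInfty (fun x => max (f₁ x) (f₂ x)) u ⊆
      ⋃ (l : ℝ) (_ : 0 ≤ l ∧ l ≤ 1), (lamComp l f₁ u + lamComp (1 - l) f₂ u)) ∧
    dirSingSubdiffInfty (fun x => max (f₁ x) (f₂ x)) u ⊆
      dirSingSubdiffInfty f₁ u + dirSingSubdiffInfty f₂ u := by
  constructor
  · intro ξ hξ
    obtain ⟨x, r, w, hx, hr, hw, hlim⟩ := hξ
    obtain ⟨ζ₁, ζ₂, σ₁, σ₂, hσ₁, hσ₂, hσsum, hζsum, hg₁, hg₂⟩ :=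
      key f₁ f₂ hf₁ hf₂ u hqc ξ 1 x r w hx hw
        (by rw [show (-(1:ℝ)) = (-1 : ℝ) from rfl]; exact hlim)
    have hσ₂eq : σ₂ = 1 - σ₁ := by linarith
    refine Set.mem_iUnion.mpr ⟨σ₁, Set.mem_iUnion.mpr ⟨⟨hσ₁, by linarith⟩, ?_⟩⟩
    have hmem₁ : ζ₁ ∈ lamComp σ₁ f₁ u := by
      rw [lamComp]
      by_cases h0 : σ₁ = 0
      · rw [if_pos h0]
        rw [h0, genSub_zero] at hg₁
        exact hg₁
      · rw [if_neg h0]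
        exact genSub_scale (lt_of_le_of_ne hσ₁ (Ne.symm h0)) hg₁
    have hmem₂ : ζ₂ ∈ lamComp (1 - σ₁) f₂ u := by
      rw [← hσ₂eq, lamComp]
      by_cases h0 : σ₂ = 0
      · rw [if_pos h0]
        rw [h0, genSub_zero] at hg₂
        exact hg₂
      · rw [if_neg h0]
        exact genSub_scale (lt_of_le_of_ne hσ₂ (Ne.symm h0)) hg₂
    exact Set.mem_add.mpr ⟨ζ₁, hmem₁, ζ₂, hmem₂, hζsum⟩
  · intro ξ hξ
    obtain ⟨x, r, w, hx, hr, hw, hlim⟩ := hξ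
    obtain ⟨ζ₁, ζ₂, σ₁, σ₂, hσ₁, hσ₂, hσsum, hζsum, hg₁, hg₂⟩ :=
      key f₁ f₂ hf₁ hf₂ u hqc ξ 0 x r w hx hw
        (by rw [show (-(0:ℝ)) = (0 : ℝ) from neg_zero]; exact hlim)
    have h10 : σ₁ = 0 := by linarith
    have h20 : σ₂ = 0 := by linarith
    rw [h10, genSub_zero] at hg₁
    rw [h20, genSub_zero] at hg₂
    exact Set.mem_add.mpr ⟨ζ₁, hg₁, ζ₂, hg₂, hζsum⟩
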